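/- Let R be an integral domain and a, b nonzero elements of R. If b is not a zero-divisor on R/(a), then the ring R[T]/(bT − a) is an integral domain. -/

import Mathlib

open Polynomial

/-- If `b` is not a zero-divisor on `R/(a)`, then `R[T]/(bT - a)` is an integral domain. -/
theorem stmt2 {R : Type*} [CommRing R] [IsDomain R] (a b : R) (ha : a ≠ 0) (hb : b ≠ 0)
    (h : ∀ x : R ⧸ Ideal.span {a}, Ideal.Quotient.mk (Ideal.span {a}) b * x = 0 → x = 0) :
    IsDomain (Polynomial R ⧸
      Ideal.span {Polynomial.C b * Polynomial.X - Polynomial.C a}) := by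
  set p : R[X] := C b * X - C a with hpdef
  -- cancellation: if p divides b * f then p divides f
  have hcancel : ∀ f : R[X], p ∣ C b * f → p ∣ f := by
    rintro f ⟨q, hq⟩
    set π := Ideal.Quotient.mk (Ideal.span {a}) with hπ
    have hπa : π a = 0 := Ideal.Quotient.eq_zero_iff_mem.mpr (Ideal.mem_span_singleton_self a)
    have hmap : (f - X * q).map π = 0 := by
      have h1 : C (π b) * (f - X * q).map π = 0 := by
        have := congrArg (Polynomial.map π) hq
        simp only [hpdef, Polynomial.map_mul, Polynomial.map_sub, Polynomial.map_C,
          Polynomial.map_X, hπa, map_zero, C_0] at this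
        rw [Polynomial.map_sub, Polynomial.map_mul, Polynomial.map_X]
        ring_nf
        ring_nf at this
        linear_combination this
      ext i
      have h2 := congrArg (fun u => Polynomial.coeff u i) h1
      simp only [coeff_C_mul, coeff_zero] at h2 ⊢
      exact h (((f - X * q).map π).coeff i) h2
    have hadvd : C a ∣ f - X * q := by
      rw [C_dvd_iff_dvd_coeff]
      intro i
      rw [← Ideal.mem_span_singleton]
      rw [← Ideal.Quotient.eq_zero_iff_mem, ← hπ]
      rw [← Polynomial.coeff_map, hmap, coeff_zero]
    obtain ⟨w, hw⟩ := hadvd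
    have hfw : f = X * q + C a * w := by linear_combination hw
    have hq' : C a * (C b * w + q) = 0 := by
      rw [hfw] at hq
      rw [hpdef] at hq
      linear_combination hq
    have hCa : (C a : R[X]) ≠ 0 := by simpa using ha
    have hqw : q = -(C b * w) := by
      rcases mul_eq_zero.mp hq' with h0 | h0
      · exact absurd h0 hCa
      · linear_combination h0
    have hCb : (C b : R[X]) ≠ 0 := by simpa using hb
    refine ⟨-w, mul_left_cancel₀ hCb ?_⟩
    rw [hq, hqw]; ring
  -- strip powers of b
  have hstrip : ∀ n : ℕ, ∀ f : R[X], p ∣ C b ^ n * f → p ∣ f := by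
    intro n
    induction n with
    | zero => intro f hf; simpa using hf
    | succ n ih =>
      intro f hf
      have : C b ^ (n + 1) * f = C b ^ n * (C b * f) := by ring
      rw [this] at hf
      exact hcancel f (ih _ hf)
  -- fraction field setup
  set K := FractionRing R
  have hinj : Function.Injective (algebraMap R K) := IsFractionRing.injective R K
  have hbK : algebraMap R K b ≠ 0 := fun h0 => hb (hinj (by simpa using h0))
  set t : K := algebraMap R K a / algebraMap R K b with ht
  have hbt : algebraMap R K b * t = algebraMap R K a := by
    rw [ht]; exact mul_div_cancel₀ _ hbK
  have haevalp : aeval t p = 0 := by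
    rw [hpdef]
    simp [aeval_C, hbt]
  -- key lemma: if f(a/b) = 0 then p ∣ b^n f for n = deg f
  have hkey : ∀ n : ℕ, ∀ f : R[X], f.natDegree ≤ n → aeval t f = 0 → p ∣ C b ^ n * f := by
    intro n
    induction n with
    | zero =>
      intro f hdeg hf
      rw [Polynomial.eq_C_of_natDegree_le_zero hdeg] at hf ⊢
      rw [aeval_C] at hf
      have : f.coeff 0 = 0 := hinj (by simpa using hf)
      simp [this]
    | succ n ih =>
      intro f hdeg hf
      set g : R[X] := C a * f.divX + C (b * f.coeff 0) with hg
      have hgdeg : g.natDegree ≤ n := by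
        rw [hg]
        apply le_trans (natDegree_add_le _ _)
        simp only [natDegree_C, max_le_iff]
        constructor
        · apply le_trans (natDegree_C_mul_le _ _)
          rw [natDegree_divX_eq_natDegree_tsub_one]
          omega
        · omega
      have hgeval : aeval t g = 0 := by
        have hfsplit := congrArg (aeval t) (X_mul_divX_add f)
        simp only [map_add, map_mul, aeval_X, aeval_C, hf] at hfsplit
        rw [hg]
        simp only [map_add, map_mul, aeval_C]
        calc algebraMap R K a * aeval t f.divX
              + algebraMap R K b * algebraMap R K (f.coeff 0)
            = algebraMap R K b * (t * aeval t f.divX + algebraMap R K (f.coeff 0)) := by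
              rw [← hbt]; ring
          _ = 0 := by rw [hfsplit]; ring
      have hkeyeq : C b * f = p * f.divX + g := by
        conv_lhs => rw [← X_mul_divX_add f]
        rw [hpdef, hg, C_mul]
        ring
      have : C b ^ (n + 1) * f = C b ^ n * (C b * f) := by ring
      rw [this, hkeyeq, mul_add]
      exact dvd_add (Dvd.dvd.mul_left (dvd_mul_right p f.divX) _)
        (ih g hgdeg hgeval)
  -- p is prime
  have hpdeg : p.natDegree = 1 := by
    rw [hpdef, sub_eq_add_neg, ← C_neg]
    exact natDegree_linear hb
  have hp0 : p ≠ 0 := fun h0 => by simp [h0] at hpdeg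
  have hpu : ¬ IsUnit p := fun hu => by
    have := natDegree_eq_zero_of_isUnit hu
    omega
  have hprime : Prime p := by
    refine ⟨hp0, hpu, fun f g hfg => ?_⟩
    obtain ⟨s, hs⟩ := hfg
    have h0 : aeval t f * aeval t g = 0 := by
      have := congrArg (aeval t) hs
      simp only [map_mul, haevalp, zero_mul] at this
      exact this
    rcases mul_eq_zero.mp h0 with h1 | h1
    · exact Or.inl (hstrip _ f (hkey f.natDegree f le_rfl h1))
    · exact Or.inr (hstrip _ g (hkey g.natDegree g le_rfl h1))
  have : (Ideal.span {p}).IsPrime := (Ideal.span_singleton_prime hp0).mpr hprime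
  exact Ideal.Quotient.isDomain _
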